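/- Let τ be a term order on S = k[x_0,...,x_r] with x_0 > ... > x_r, and let V ⊆ S_a be a τ-segment with dim_k(S_a/V) ≤ a. Then S_1·V is a τ-segment in S_{a+1} and dim_k(S_{a+1}/S_1 V) = dim_k(S_a/V). -/

import Mathlib

/-- The (total) degree of a monomial exponent vector. -/
def mdeg {N : ℕ} (m : Fin N →₀ ℕ) : ℕ := m.sum fun _ e => e

/-- `D` is a `τ`-segment in degree `d`: a set of degree-`d` monomials containing, with any
monomial, every `τ`-larger monomial of degree `d`. -/
def IsSegment {N : ℕ} (τ : MonomialOrder (Fin N)) (d : ℕ) (D : Set (Fin N →₀ ℕ)) : Prop :=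
  (∀ m ∈ D, mdeg m = d) ∧
    ∀ m ∈ D, ∀ n : Fin N →₀ ℕ, mdeg n = d → τ.toSyn m ≤ τ.toSyn n → n ∈ D

/-- The monomial order `τ` sorts the variables as `x₀ > x₁ > … > x_r`. -/
def VarOrdered {N : ℕ} (τ : MonomialOrder (Fin N)) : Prop :=
  ∀ i j : Fin N, i ≤ j → τ.toSyn (Finsupp.single j 1) ≤ τ.toSyn (Finsupp.single i 1)

lemma mdeg_add' {N : ℕ} (m n : Fin N →₀ ℕ) : mdeg (m + n) = mdeg m + mdeg n := by
  unfold mdeg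
  exact Finsupp.sum_add_index' (fun _ => rfl) (fun _ _ _ => rfl)

lemma mdeg_single' {N : ℕ} (i : Fin N) (c : ℕ) : mdeg (Finsupp.single i c) = c := by
  unfold mdeg
  exact Finsupp.sum_single_index rfl

lemma sub_single_add' {N : ℕ} (n : Fin N →₀ ℕ) (j : Fin N) (h : n j ≠ 0) :
    n - Finsupp.single j 1 + Finsupp.single j 1 = n := by
  apply tsub_add_cancel_of_le
  rw [Finsupp.single_le_iff]
  omega

lemma exists_pos_coord' {N : ℕ} (n : Fin N →₀ ℕ) (h : mdeg n ≠ 0) : ∃ j, n j ≠ 0 := by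
  by_contra hc
  push_neg at hc
  apply h
  have : n = 0 := Finsupp.ext fun i => hc i
  rw [this]
  rfl

lemma var_le' {r : ℕ} (τ : MonomialOrder (Fin (r + 1))) (hvar : VarOrdered τ) (i : Fin (r + 1)) :
    τ.toSyn (Finsupp.single (Fin.last r) 1) ≤ τ.toSyn (Finsupp.single i 1) :=
  hvar i (Fin.last r) (Fin.le_last i)

lemma var_lt' {r : ℕ} (τ : MonomialOrder (Fin (r + 1))) (hvar : VarOrdered τ)
    {i : Fin (r + 1)} (hi : i ≠ Fin.last r) :
    τ.toSyn (Finsupp.single (Fin.last r) 1) < τ.toSyn (Finsupp.single i 1) := by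
  refine lt_of_le_of_ne (var_le' τ hvar i) fun h => hi ?_
  exact (Finsupp.single_left_injective one_ne_zero (τ.toSyn.injective h)).symm

/-- Every degree-`a` monomial outside a small segment complement is divisible by `x_r`. -/
lemma claim1 {r : ℕ} (τ : MonomialOrder (Fin (r + 1))) (hvar : VarOrdered τ)
    (a : ℕ) (D : Set (Fin (r + 1) →₀ ℕ)) (hseg : IsSegment τ a D)
    (hfin : { m : Fin (r + 1) →₀ ℕ | mdeg m = a ∧ m ∉ D }.Finite)
    (hcard : { m : Fin (r + 1) →₀ ℕ | mdeg m = a ∧ m ∉ D }.ncard ≤ a)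
    {m : Fin (r + 1) →₀ ℕ} (hm : mdeg m = a) (hmD : m ∉ D) : m (Fin.last r) ≠ 0 := by
  intro h0
  classical
  set W : Set (Fin (r + 1) →₀ ℕ) := { m | mdeg m = a ∧ m ∉ D } with hW
  have Wdown : ∀ p ∈ W, ∀ q : Fin (r + 1) →₀ ℕ, mdeg q = a → τ.toSyn q ≤ τ.toSyn p → q ∈ W := by
    intro p hp q hq hle
    exact ⟨hq, fun hqD => hp.2 (hseg.2 q hqD p hp.1 hle)⟩
  set step : (Fin (r + 1) →₀ ℕ) → (Fin (r + 1) →₀ ℕ) := fun n =>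
    if h : ∃ i, i ≠ Fin.last r ∧ n i ≠ 0 then
      n - Finsupp.single h.choose 1 + Finsupp.single (Fin.last r) 1
    else n with hstepdef
  set g : ℕ → (Fin (r + 1) →₀ ℕ) := fun k => step^[k] m with hg
  have key : ∀ k, k ≤ a → g k ∈ W ∧ g k (Fin.last r) = k := by
    intro k
    induction k with
    | zero =>
      intro _
      refine ⟨⟨hm, hmD⟩, h0⟩
    | succ k ih =>
      intro hk
      obtain ⟨hgW, hglast⟩ := ih (by omega)
      have hex : ∃ i, i ≠ Fin.last r ∧ g k i ≠ 0 := by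
        by_contra hc
        push_neg at hc
        have heq : g k = Finsupp.single (Fin.last r) (g k (Fin.last r)) := by
          ext i
          rcases eq_or_ne i (Fin.last r) with h | h
          · rw [h, Finsupp.single_eq_same]
          · rw [Finsupp.single_eq_of_ne' (Ne.symm h)]
            exact hc i h
        have hd : mdeg (g k) = k := by rw [heq, mdeg_single', hglast]
        have := hgW.1
        omega
      set i := hex.choose with hi
      obtain ⟨hi1, hi2⟩ := hex.choose_spec
      have hstep : g (k + 1) = g k - Finsupp.single i 1 + Finsupp.single (Fin.last r) 1 := by
        have h1 : g (k + 1) = step (g k) := Function.iterate_succ_apply' step k m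
        rw [h1, hstepdef]
        exact dif_pos hex
      have hsub : g k - Finsupp.single i 1 + Finsupp.single i 1 = g k :=
        sub_single_add' (g k) i hi2
      have hdsub : mdeg (g k - Finsupp.single i 1) + 1 = a := by
        have := congrArg mdeg hsub
        rw [mdeg_add', mdeg_single'] at this
        rw [this, hgW.1]
      have hdeg : mdeg (g (k + 1)) = a := by
        rw [hstep, mdeg_add', mdeg_single', hdsub]
      have hlt : τ.toSyn (g (k + 1)) < τ.toSyn (g k) := by
        rw [hstep, map_add]
        calc τ.toSyn (g k - Finsupp.single i 1) + τ.toSyn (Finsupp.single (Fin.last r) 1)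
            < τ.toSyn (g k - Finsupp.single i 1) + τ.toSyn (Finsupp.single i 1) :=
              add_lt_add_right (var_lt' τ hvar hi1) _
          _ = τ.toSyn (g k) := by rw [← map_add, hsub]
      refine ⟨Wdown (g k) hgW (g (k + 1)) hdeg hlt.le, ?_⟩
      rw [hstep, Finsupp.add_apply, Finsupp.tsub_apply, Finsupp.single_eq_same,
        Finsupp.single_eq_of_ne' hi1, hglast]
      omega
  have hinj : Set.InjOn (fun k => g k) (Finset.range (a + 1)) := by
    intro x hx y hy hxy
    simp only [Finset.coe_range, Set.mem_Iio] at hx hy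
    have h1 := (key x (by omega)).2
    have h2 := (key y (by omega)).2
    have hgxy : g x = g y := hxy
    rw [← h1, ← h2, hgxy]
  have hle : (Finset.range (a + 1)).card ≤ hfin.toFinset.card := by
    apply Finset.card_le_card_of_injOn (fun k => g k) _ hinj
    intro k hk
    rw [Finset.mem_coe, Set.Finite.mem_toFinset]
    exact (key k (by simp at hk; omega)).1
  rw [Finset.card_range] at hle
  rw [Set.ncard_eq_toFinset_card _ hfin] at hcard
  omega

theorem stmt14 {r : ℕ} (τ : MonomialOrder (Fin (r + 1))) (hvar : VarOrdered τ)
    (a : ℕ) (D : Set (Fin (r + 1) →₀ ℕ)) (hseg : IsSegment τ a D)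
    (hfin : { m : Fin (r + 1) →₀ ℕ | mdeg m = a ∧ m ∉ D }.Finite)
    (hcard : { m : Fin (r + 1) →₀ ℕ | mdeg m = a ∧ m ∉ D }.ncard ≤ a) :
    IsSegment τ (a + 1) { n | ∃ m ∈ D, ∃ i : Fin (r + 1), n = m + Finsupp.single i 1 } ∧
      { n : Fin (r + 1) →₀ ℕ | mdeg n = a + 1 ∧
          n ∉ { n | ∃ m ∈ D, ∃ i : Fin (r + 1), n = m + Finsupp.single i 1 } }.ncard =
        { m : Fin (r + 1) →₀ ℕ | mdeg m = a ∧ m ∉ D }.ncard := by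
  classical
  set E : Set (Fin (r + 1) →₀ ℕ) :=
    { n | ∃ m ∈ D, ∃ i : Fin (r + 1), n = m + Finsupp.single i 1 } with hE
  set W : Set (Fin (r + 1) →₀ ℕ) := { m | mdeg m = a ∧ m ∉ D } with hW
  set W' : Set (Fin (r + 1) →₀ ℕ) := { n | mdeg n = a + 1 ∧ n ∉ E } with hW'
  -- degrees in E
  have hEdeg : ∀ n ∈ E, mdeg n = a + 1 := by
    rintro n ⟨m, hm, i, rfl⟩
    rw [mdeg_add', mdeg_single', hseg.1 m hm]
  -- claim 3 : m ∈ W → m + e_r ∈ W'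
  have claim3 : ∀ m ∈ W, m + Finsupp.single (Fin.last r) 1 ∈ W' := by
    rintro m ⟨hmd, hmD⟩
    refine ⟨by rw [mdeg_add', mdeg_single', hmd], ?_⟩
    rintro ⟨m', hm', i, heq⟩
    apply hmD
    refine hseg.2 m' hm' m hmd ?_
    have h1 : τ.toSyn m' + τ.toSyn (Finsupp.single (Fin.last r) 1) ≤
        τ.toSyn m + τ.toSyn (Finsupp.single (Fin.last r) 1) := by
      calc τ.toSyn m' + τ.toSyn (Finsupp.single (Fin.last r) 1)
          ≤ τ.toSyn m' + τ.toSyn (Finsupp.single i 1) := add_le_add_right (var_le' τ hvar i) _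
        _ = τ.toSyn m + τ.toSyn (Finsupp.single (Fin.last r) 1) := by
            rw [← map_add, ← map_add, ← heq]
    exact le_of_add_le_add_right h1
  -- claim 2 : n ∈ W' → n r ≠ 0 and n - e_r ∈ W
  have claim2sub : ∀ n ∈ W', ∀ j : Fin (r + 1), n j ≠ 0 → n - Finsupp.single j 1 ∈ W := by
    rintro n ⟨hnd, hnE⟩ j hj
    have hsub := sub_single_add' n j hj
    have hd : mdeg (n - Finsupp.single j 1) = a := by
      have := congrArg mdeg hsub
      rw [mdeg_add', mdeg_single'] at this
      omega
    refine ⟨hd, fun hD => hnE ⟨n - Finsupp.single j 1, hD, j, hsub.symm⟩⟩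
  have claim2 : ∀ n ∈ W', n (Fin.last r) ≠ 0 := by
    intro n hn
    obtain ⟨j, hj⟩ := exists_pos_coord' n (by rw [hn.1]; omega)
    rcases eq_or_ne j (Fin.last r) with rfl | hne
    · exact hj
    · have := claim1 τ hvar a D hseg hfin hcard (claim2sub n hn j hj).1 (claim2sub n hn j hj).2
      rw [Finsupp.tsub_apply, Finsupp.single_eq_of_ne' hne] at this
      simpa using this
  -- W' = (· + e_r) '' W
  have himg : W' = (fun m => m + Finsupp.single (Fin.last r) 1) '' W := by
    apply Set.eq_of_subset_of_subset
    · intro n hn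
      have h1 := claim2 n hn
      have h2 := claim2sub n hn (Fin.last r) h1
      exact ⟨n - Finsupp.single (Fin.last r) 1, h2, sub_single_add' n (Fin.last r) h1⟩
    · rintro n ⟨m, hm, rfl⟩
      exact claim3 m hm
  constructor
  · constructor
    · exact hEdeg
    · intro n hn n'' hd'' hle
      by_contra hn''
      obtain ⟨w, hw, hw'⟩ : n'' ∈ (fun m => m + Finsupp.single (Fin.last r) 1) '' W := by
        rw [← himg]; exact ⟨hd'', hn''⟩
      obtain ⟨m, hm, i, rfl⟩ := hn
      apply hw.2
      refine hseg.2 m hm w hw.1 ?_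
      have h1 : τ.toSyn m + τ.toSyn (Finsupp.single (Fin.last r) 1) ≤
          τ.toSyn w + τ.toSyn (Finsupp.single (Fin.last r) 1) := by
        calc τ.toSyn m + τ.toSyn (Finsupp.single (Fin.last r) 1)
            ≤ τ.toSyn m + τ.toSyn (Finsupp.single i 1) := add_le_add_right (var_le' τ hvar i) _
          _ = τ.toSyn (m + Finsupp.single i 1) := (map_add _ _ _).symm
          _ ≤ τ.toSyn n'' := hle
          _ = τ.toSyn w + τ.toSyn (Finsupp.single (Fin.last r) 1) := by rw [← hw', map_add]
      exact le_of_add_le_add_right h1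
  · show W'.ncard = W.ncard
    rw [himg]
    exact Set.ncard_image_of_injective W (add_left_injective _)
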